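/- For the worst-case logistic loss f_k and t ≤ k, min over x ∈ K_{t,k} of f_k(x) equals 8(k - t)·log 2 + min over u ∈ ℝ^t of f_t(u), where K_{t,k} = span{e_{k-t+1}, ..., e_k}. -/
import Mathlib


noncomputable section

/-- The k×k matrix `W_k` with 1's on the main anti-diagonal (1-based entries `i+j = k+1`)
and -1's on the adjacent anti-diagonal (`i+j = k`). -/
def Wmat (k : ℕ) : Matrix (Fin k) (Fin k) ℝ :=
  Matrix.of fun i j =>
    if (i : ℕ) + (j : ℕ) + 2 = k + 1 then 1
    else if (i : ℕ) + (j : ℕ) + 2 = k then -1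
    else 0

/-- The 4k×k data matrix with vertical blocks `2σW_k, -2ζW_k, -2σW_k, 2ζW_k`. -/
def Amat (σ ζ : ℝ) (k : ℕ) : Matrix (Fin (4 * k)) (Fin k) ℝ :=
  Matrix.of fun i j =>
    if h1 : (i : ℕ) < k then 2 * σ * Wmat k ⟨i, h1⟩ j
    else if h2 : (i : ℕ) < 2 * k then -2 * ζ * Wmat k ⟨(i : ℕ) - k, by omega⟩ j
    else if h3 : (i : ℕ) < 3 * k then -2 * σ * Wmat k ⟨(i : ℕ) - 2 * k, by omega⟩ j
    else 2 * ζ * Wmat k ⟨(i : ℕ) - 3 * k, by have := i.isLt; omega⟩ j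

/-- The response vector `b_k = (𝟙_k, 𝟙_k, -𝟙_k, -𝟙_k)`. -/
def bvec (k : ℕ) : Fin (4 * k) → ℝ := fun i => if (i : ℕ) < 2 * k then 1 else -1

/-- The binary logistic regression loss `f_k(x) = h(A_k x) - b_kᵀ A_k x` with
`h(u) = Σᵢ 2 log(2 cosh(uᵢ/2))`. -/
def fk (σ ζ : ℝ) (k : ℕ) (x : Fin k → ℝ) : ℝ :=
  (∑ i, 2 * Real.log (2 * Real.cosh ((Amat σ ζ k).mulVec x i / 2)))
    - ∑ i, bvec k i * (Amat σ ζ k).mulVec x i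

/-- `x* = c·(1, 2, …, k)ᵀ`. -/
def xstar (c : ℝ) (k : ℕ) : Fin k → ℝ := fun i => c * ((i : ℕ) + 1)

/-- `K_{t,k} = span{e_{k-t+1}, …, e_k}` (1-based indexing). -/
def Kspan (k t : ℕ) : Submodule ℝ (Fin k → ℝ) :=
  Submodule.span ℝ ((fun i : Fin k => Pi.single i (1 : ℝ)) '' {i : Fin k | k - t ≤ (i : ℕ)})

noncomputable section
lemma Wmat_mulVec (k : ℕ) (x : Fin k → ℝ) (i : Fin k) :
    (Wmat k).mulVec x i
      = x ⟨k - 1 - i, by omega⟩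
        - (if h : (i : ℕ) + 2 ≤ k then x ⟨k - 2 - i, by omega⟩ else 0) := by
  have hik := i.isLt
  unfold Matrix.mulVec dotProduct Wmat
  have key : ∀ j : Fin k,
      Matrix.of (fun i j : Fin k =>
        if (i : ℕ) + (j : ℕ) + 2 = k + 1 then (1:ℝ)
        else if (i : ℕ) + (j : ℕ) + 2 = k then -1 else 0) i j * x j
      = (if j = (⟨k - 1 - i, by omega⟩ : Fin k) then x j else 0)
        + (if h : (i : ℕ) + 2 ≤ k then
            (if j = (⟨k - 2 - i, by omega⟩ : Fin k) then -x j else 0) else 0) := by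
    intro j
    simp only [Matrix.of_apply]
    by_cases h1 : (i : ℕ) + (j : ℕ) + 2 = k + 1
    · have hj : j = (⟨k - 1 - i, by omega⟩ : Fin k) := by
        apply Fin.ext; simp; omega
      rw [if_pos h1, hj]
      simp only [if_pos rfl]
      by_cases hle : (i : ℕ) + 2 ≤ k
      · have hne : ¬ ((⟨k - 1 - i, by omega⟩ : Fin k) = (⟨k - 2 - i, by omega⟩ : Fin k)) := by
          simp only [Fin.mk.injEq]; omega
        rw [dif_pos hle, if_neg hne]; simp
      · rw [dif_neg hle]; simp
    · rw [if_neg h1]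
      have hj1 : ¬ (j = (⟨k - 1 - i, by omega⟩ : Fin k)) := by
        intro hc; rw [Fin.ext_iff] at hc; simp at hc; omega
      rw [if_neg hj1]
      by_cases h2 : (i : ℕ) + (j : ℕ) + 2 = k
      · have hle : (i : ℕ) + 2 ≤ k := by omega
        have hj2 : j = (⟨k - 2 - i, by omega⟩ : Fin k) := by
          apply Fin.ext; simp; omega
        rw [if_pos h2, dif_pos hle, if_pos hj2]; ring
      · rw [if_neg h2]
        split
        · rename_i hle
          have hj2 : ¬ (j = (⟨k - 2 - i, by omega⟩ : Fin k)) := by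
            intro hc; rw [Fin.ext_iff] at hc; simp at hc; omega
          rw [if_neg hj2]; ring
        · ring
  rw [Finset.sum_congr rfl (fun j _ => key j), Finset.sum_add_distrib,
    Finset.sum_ite_eq' Finset.univ _ x]
  simp only [Finset.mem_univ, if_true]
  congr 1
  split
  · rw [Finset.sum_ite_eq' Finset.univ _ (fun j => -x j)]
    simp
  · simp

end
noncomputable section
lemma Amat_mulVec (σ ζ : ℝ) (k : ℕ) (x : Fin k → ℝ) (i : Fin (4 * k)) :
    (Amat σ ζ k).mulVec x i =
      if h1 : (i : ℕ) < k then 2 * σ * (Wmat k).mulVec x ⟨i, h1⟩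
      else if h2 : (i : ℕ) < 2 * k then -2 * ζ * (Wmat k).mulVec x ⟨(i : ℕ) - k, by omega⟩
      else if h3 : (i : ℕ) < 3 * k then -2 * σ * (Wmat k).mulVec x ⟨(i : ℕ) - 2 * k, by omega⟩
      else 2 * ζ * (Wmat k).mulVec x ⟨(i : ℕ) - 3 * k, by have := i.isLt; omega⟩ := by
  unfold Matrix.mulVec dotProduct Amat
  by_cases h1 : (i : ℕ) < k
  · simp only [Matrix.of_apply, dif_pos h1, Finset.mul_sum]
    exact Finset.sum_congr rfl fun j _ => by ring
  · by_cases h2 : (i : ℕ) < 2 * k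
    · simp only [Matrix.of_apply, dif_neg h1, dif_pos h2, Finset.mul_sum]
      exact Finset.sum_congr rfl fun j _ => by ring
    · by_cases h3 : (i : ℕ) < 3 * k
      · simp only [Matrix.of_apply, dif_neg h1, dif_neg h2, dif_pos h3, Finset.mul_sum]
        exact Finset.sum_congr rfl fun j _ => by ring
      · simp only [Matrix.of_apply, dif_neg h1, dif_neg h2, dif_neg h3, Finset.mul_sum]
        exact Finset.sum_congr rfl fun j _ => by ring

lemma Amat_mulVec_b0 (σ ζ : ℝ) (k : ℕ) (x : Fin k → ℝ) (r : Fin k) :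
    (Amat σ ζ k).mulVec x ⟨(r : ℕ), by omega⟩ = 2 * σ * (Wmat k).mulVec x r := by
  rw [Amat_mulVec, dif_pos (show ((⟨(r : ℕ), by omega⟩ : Fin (4 * k)) : ℕ) < k from r.isLt)]

lemma Amat_mulVec_b1 (σ ζ : ℝ) (k : ℕ) (x : Fin k → ℝ) (r : Fin k) :
    (Amat σ ζ k).mulVec x ⟨k + (r : ℕ), by omega⟩ = -2 * ζ * (Wmat k).mulVec x r := by
  have hr := r.isLt
  rw [Amat_mulVec, dif_neg (show ¬((⟨k + (r : ℕ), by omega⟩ : Fin (4 * k)) : ℕ) < k by simp),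
    dif_pos (show ((⟨k + (r : ℕ), by omega⟩ : Fin (4 * k)) : ℕ) < 2 * k by simp; omega)]
  congr 1
  congr 1
  apply Fin.ext
  simp

lemma Amat_mulVec_b2 (σ ζ : ℝ) (k : ℕ) (x : Fin k → ℝ) (r : Fin k) :
    (Amat σ ζ k).mulVec x ⟨2 * k + (r : ℕ), by omega⟩ = -2 * σ * (Wmat k).mulVec x r := by
  have hr := r.isLt
  rw [Amat_mulVec,
    dif_neg (show ¬((⟨2 * k + (r : ℕ), by omega⟩ : Fin (4 * k)) : ℕ) < k by simp; omega),
    dif_neg (show ¬((⟨2 * k + (r : ℕ), by omega⟩ : Fin (4 * k)) : ℕ) < 2 * k by simp),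
    dif_pos (show ((⟨2 * k + (r : ℕ), by omega⟩ : Fin (4 * k)) : ℕ) < 3 * k by simp; omega)]
  congr 1
  congr 1
  apply Fin.ext
  simp

lemma Amat_mulVec_b3 (σ ζ : ℝ) (k : ℕ) (x : Fin k → ℝ) (r : Fin k) :
    (Amat σ ζ k).mulVec x ⟨3 * k + (r : ℕ), by omega⟩ = 2 * ζ * (Wmat k).mulVec x r := by
  have hr := r.isLt
  rw [Amat_mulVec,
    dif_neg (show ¬((⟨3 * k + (r : ℕ), by omega⟩ : Fin (4 * k)) : ℕ) < k by simp; omega),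
    dif_neg (show ¬((⟨3 * k + (r : ℕ), by omega⟩ : Fin (4 * k)) : ℕ) < 2 * k by simp; omega),
    dif_neg (show ¬((⟨3 * k + (r : ℕ), by omega⟩ : Fin (4 * k)) : ℕ) < 3 * k by simp)]
  congr 1
  congr 1
  apply Fin.ext
  simp
end
noncomputable section
lemma sum_univ_four_mul {M : Type*} [AddCommMonoid M] (k : ℕ) (g : Fin (4 * k) → M) :
    ∑ i, g i = ∑ r : Fin k,
      (g ⟨(r : ℕ), by omega⟩ + g ⟨k + (r : ℕ), by omega⟩
        + g ⟨2 * k + (r : ℕ), by omega⟩ + g ⟨3 * k + (r : ℕ), by omega⟩) := by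
  rw [← Equiv.sum_comp (finProdFinEquiv (m := 4) (n := k)) g, Fintype.sum_prod_type,
    Fin.sum_univ_four]
  have e0 : ∀ b : Fin k, g (finProdFinEquiv (0, b)) = g ⟨(b : ℕ), by omega⟩ :=
    fun b => congrArg g (Fin.ext (by simp [finProdFinEquiv]))
  have e1 : ∀ b : Fin k, g (finProdFinEquiv (1, b)) = g ⟨k + (b : ℕ), by omega⟩ :=
    fun b => congrArg g (Fin.ext (by simp [finProdFinEquiv]; omega))
  have e2 : ∀ b : Fin k, g (finProdFinEquiv (2, b)) = g ⟨2 * k + (b : ℕ), by omega⟩ :=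
    fun b => congrArg g (Fin.ext (by simp [finProdFinEquiv]; omega))
  have e3 : ∀ b : Fin k, g (finProdFinEquiv (3, b)) = g ⟨3 * k + (b : ℕ), by omega⟩ :=
    fun b => congrArg g (Fin.ext (by simp [finProdFinEquiv]; omega))
  simp only [e0, e1, e2, e3, Finset.sum_add_distrib]

def gph (a : ℝ) : ℝ := 2 * Real.log (2 * Real.cosh (a / 2))

def phi (σ ζ : ℝ) (s : ℝ) : ℝ :=
  (gph (2 * σ * s) - 2 * σ * s) + (gph (-2 * ζ * s) + 2 * ζ * s)
    + (gph (-2 * σ * s) - 2 * σ * s) + (gph (2 * ζ * s) + 2 * ζ * s)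

lemma fk_eq_sum_phi (σ ζ : ℝ) (k : ℕ) (x : Fin k → ℝ) :
    fk σ ζ k x = ∑ r : Fin k, phi σ ζ ((Wmat k).mulVec x r) := by
  unfold fk
  rw [← Finset.sum_sub_distrib,
    sum_univ_four_mul k (fun i => 2 * Real.log (2 * Real.cosh ((Amat σ ζ k).mulVec x i / 2))
      - bvec k i * (Amat σ ζ k).mulVec x i)]
  refine Finset.sum_congr rfl fun r _ => ?_
  have hr := r.isLt
  have b0 : bvec k ⟨(r : ℕ), by omega⟩ = 1 := if_pos (by simp; omega)
  have b1 : bvec k ⟨k + (r : ℕ), by omega⟩ = 1 := if_pos (by simp; omega)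
  have b2 : bvec k ⟨2 * k + (r : ℕ), by omega⟩ = -1 := if_neg (by simp)
  have b3 : bvec k ⟨3 * k + (r : ℕ), by omega⟩ = -1 := if_neg (by simp; omega)
  rw [Amat_mulVec_b0, Amat_mulVec_b1, Amat_mulVec_b2, Amat_mulVec_b3, b0, b1, b2, b3]
  unfold phi gph
  ring
end
noncomputable section
def Emap (k t : ℕ) (htk : t ≤ k) (u : Fin t → ℝ) : Fin k → ℝ :=
  fun i => if h : k - t ≤ (i : ℕ) then u ⟨(i : ℕ) - (k - t), by have := i.isLt; omega⟩ else 0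

lemma Wmat_mulVec_Emap (k t : ℕ) (htk : t ≤ k) (u : Fin t → ℝ) (r : Fin k) :
    (Wmat k).mulVec (Emap k t htk u) r
      = if h : (r : ℕ) < t then (Wmat t).mulVec u ⟨r, h⟩ else 0 := by
  have hr := r.isLt
  rw [Wmat_mulVec]
  by_cases hrt : (r : ℕ) < t
  · rw [dif_pos hrt, Wmat_mulVec t u ⟨(r : ℕ), hrt⟩]
    unfold Emap
    congr 1
    · rw [dif_pos (show k - t ≤ k - 1 - (r : ℕ) by omega)]
      congr 1
      apply Fin.ext
      simp
      omega
    · by_cases h2 : (r : ℕ) + 2 ≤ t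
      · rw [dif_pos (show (r : ℕ) + 2 ≤ k by omega),
          dif_pos (show ((⟨(r : ℕ), hrt⟩ : Fin t) : ℕ) + 2 ≤ t by simpa using h2),
          dif_pos (show k - t ≤ k - 2 - (r : ℕ) by omega)]
        congr 1
        apply Fin.ext
        simp
        omega
      · rw [dif_neg (show ¬ ((⟨(r : ℕ), hrt⟩ : Fin t) : ℕ) + 2 ≤ t by simpa using h2)]
        by_cases hk2 : (r : ℕ) + 2 ≤ k
        · rw [dif_pos hk2, dif_neg (show ¬ k - t ≤ k - 2 - (r : ℕ) by omega)]
        · rw [dif_neg hk2]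
  · rw [dif_neg hrt]
    unfold Emap
    rw [dif_neg (show ¬ k - t ≤ k - 1 - (r : ℕ) by omega)]
    by_cases hk2 : (r : ℕ) + 2 ≤ k
    · rw [dif_pos hk2, dif_neg (show ¬ k - t ≤ k - 2 - (r : ℕ) by omega)]
      ring
    · rw [dif_neg hk2]
      ring

lemma Emap_mem_Kspan (k t : ℕ) (htk : t ≤ k) (u : Fin t → ℝ) :
    Emap k t htk u ∈ Kspan k t := by
  have hrep : Emap k t htk u
      = ∑ m : Fin t, u m • (Pi.single (⟨k - t + (m : ℕ), by omega⟩ : Fin k) (1 : ℝ) : Fin k → ℝ) := by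
    funext i
    have hi := i.isLt
    simp only [Emap, Finset.sum_apply, Pi.smul_apply, Pi.single_apply, smul_eq_mul,
      mul_ite, mul_one, mul_zero]
    by_cases h : k - t ≤ (i : ℕ)
    · rw [dif_pos h, Finset.sum_eq_single (⟨(i : ℕ) - (k - t), by omega⟩ : Fin t)]
      · rw [if_pos (Fin.ext (by show (i : ℕ) = k - t + ((i : ℕ) - (k - t)); omega))]
      · intro m _ hm
        rw [if_neg]
        intro hc
        apply hm
        apply Fin.ext
        have hv : (i : ℕ) = k - t + (m : ℕ) := congrArg Fin.val hc
        show (m : ℕ) = (i : ℕ) - (k - t)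
        omega
      · intro habs
        exact absurd (Finset.mem_univ _) habs
    · rw [dif_neg h]
      symm
      apply Finset.sum_eq_zero
      intro m _
      rw [if_neg]
      intro hc
      have hv : (i : ℕ) = k - t + (m : ℕ) := congrArg Fin.val hc
      omega
  rw [hrep]
  apply Submodule.sum_mem
  intro m _
  apply Submodule.smul_mem
  apply Submodule.subset_span
  exact ⟨⟨k - t + (m : ℕ), by omega⟩, Nat.le_add_right _ _, rfl⟩

lemma Kspan_coe (k t : ℕ) (htk : t ≤ k) :
    (Kspan k t : Set (Fin k → ℝ)) = Set.range (Emap k t htk) := by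
  apply Set.Subset.antisymm
  · intro x hx
    have hzero : ∀ i : Fin k, (i : ℕ) < k - t → x i = 0 := by
      induction hx using Submodule.span_induction with
      | mem y hy =>
        obtain ⟨i0, hi0, rfl⟩ := hy
        intro i hi
        have : i ≠ i0 := by
          intro hc
          rw [hc] at hi
          have hle : k - t ≤ (i0 : ℕ) := hi0
          omega
        simp [Pi.single_apply, this]
      | zero => intro i _; rfl
      | add y z _ _ hy hz => intro i hi; simp [hy i hi, hz i hi]
      | smul c y _ hy => intro i hi; simp [hy i hi]
    refine ⟨fun m => x ⟨k - t + (m : ℕ), by have := m.isLt; omega⟩, ?_⟩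
    funext i
    have hi := i.isLt
    unfold Emap
    by_cases h : k - t ≤ (i : ℕ)
    · rw [dif_pos h]
      exact congrArg x (Fin.ext (by show k - t + ((i : ℕ) - (k - t)) = (i : ℕ); omega))
    · rw [dif_neg h]
      exact (hzero i (by omega)).symm
  · rintro x ⟨u, rfl⟩
    exact Emap_mem_Kspan k t htk u

lemma abs_le_gph (a : ℝ) : |a| ≤ gph a := by
  unfold gph
  have h1 : Real.exp (|a| / 2) ≤ 2 * Real.cosh (a / 2) := by
    rw [Real.cosh_eq]
    rcases le_or_gt 0 a with h | h
    · rw [abs_of_nonneg h]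
      have := (Real.exp_pos (-(a / 2))).le
      linarith
    · rw [abs_of_neg h]
      have := (Real.exp_pos (a / 2)).le
      have : Real.exp (-a / 2) = Real.exp (-(a / 2)) := by ring_nf
      linarith [Real.exp_pos (a / 2), this.ge, this.le]
  calc |a| = 2 * Real.log (Real.exp (|a| / 2)) := by rw [Real.log_exp]; ring
    _ ≤ 2 * Real.log (2 * Real.cosh (a / 2)) := by
        have := Real.log_le_log (Real.exp_pos _) h1
        linarith

lemma phi_nonneg (σ ζ s : ℝ) : 0 ≤ phi σ ζ s := by
  have h0 := abs_le_gph (2 * σ * s)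
  have h1 := abs_le_gph (-2 * ζ * s)
  have h2 := abs_le_gph (-2 * σ * s)
  have h3 := abs_le_gph (2 * ζ * s)
  have a0 : 2 * σ * s ≤ |2 * σ * s| := le_abs_self _
  have a1 : -(2 * ζ * s) ≤ |-2 * ζ * s| := by
    rw [show (-2 * ζ * s : ℝ) = -(2 * ζ * s) by ring]
    exact le_abs_self _
  have a2 : 2 * σ * s ≤ |-2 * σ * s| := by
    rw [show (-2 * σ * s : ℝ) = -(2 * σ * s) by ring, abs_neg]
    exact le_abs_self _
  have a3 : -(2 * ζ * s) ≤ |2 * ζ * s| := neg_le_abs _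
  unfold phi
  linarith

lemma fk_nonneg (σ ζ : ℝ) (k : ℕ) (x : Fin k → ℝ) : 0 ≤ fk σ ζ k x := by
  rw [fk_eq_sum_phi]
  exact Finset.sum_nonneg fun r _ => phi_nonneg σ ζ _

lemma phi_zero (σ ζ : ℝ) : phi σ ζ 0 = 8 * Real.log 2 := by
  unfold phi gph
  norm_num [Real.cosh_zero]
  ring
end
noncomputable section
lemma sum_split (k t : ℕ) (htk : t ≤ k) (v : Fin k → ℝ) (C : ℝ)
    (hv : ∀ r : Fin k, t ≤ (r : ℕ) → v r = C) :
    ∑ r, v r = (∑ r : Fin t, v (Fin.castLE htk r)) + ((k - t : ℕ) : ℝ) * C := by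
  classical
  have hsub : (Finset.univ.map (Fin.castLEEmb htk)) ⊆ (Finset.univ : Finset (Fin k)) :=
    Finset.subset_univ _
  rw [← Finset.sum_sdiff hsub, Finset.sum_map]
  have hcard : (Finset.univ \ Finset.univ.map (Fin.castLEEmb htk)).card = k - t := by
    rw [Finset.card_sdiff_of_subset hsub, Finset.card_map]
    simp
  have hconst : ∑ r ∈ Finset.univ \ Finset.univ.map (Fin.castLEEmb htk), v r
      = ((k - t : ℕ) : ℝ) * C := by
    rw [Finset.sum_congr rfl (fun r hr => ?_), Finset.sum_const, hcard, nsmul_eq_mul]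
    apply hv
    rw [Finset.mem_sdiff] at hr
    by_contra hlt
    exact hr.2 (Finset.mem_map.2 ⟨⟨(r : ℕ), by omega⟩, Finset.mem_univ _, Fin.ext rfl⟩)
  rw [hconst]
  exact add_comm _ _

lemma fk_Emap (σ ζ : ℝ) (k t : ℕ) (htk : t ≤ k) (u : Fin t → ℝ) :
    fk σ ζ k (Emap k t htk u) = 8 * ((k - t : ℕ) : ℝ) * Real.log 2 + fk σ ζ t u := by
  rw [fk_eq_sum_phi, fk_eq_sum_phi,
    sum_split k t htk _ (phi σ ζ 0)
      (fun r hr => by rw [Wmat_mulVec_Emap, dif_neg (not_lt.2 hr)])]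
  have hsum : ∑ r : Fin t, phi σ ζ ((Wmat k).mulVec (Emap k t htk u) (Fin.castLE htk r))
      = ∑ r : Fin t, phi σ ζ ((Wmat t).mulVec u r) := by
    refine Finset.sum_congr rfl fun r _ => ?_
    rw [Wmat_mulVec_Emap k t htk u (Fin.castLE htk r), dif_pos (show ((Fin.castLE htk r : Fin k) : ℕ) < t from r.isLt)]
    congr 1
  rw [hsum, phi_zero]
  ring

lemma sInf_const_add (c : ℝ) (S : Set ℝ) (hne : S.Nonempty) (hbd : BddBelow S) :
    sInf ((fun r => c + r) '' S) = c + sInf S := by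
  have h := (OrderIso.addLeft c).map_csInf' hne hbd
  simpa using h.symm

end

theorem min_fk_on_Kspan (σ ζ : ℝ) (hζ : 0 < ζ) (hζσ : ζ < σ) (k t : ℕ) (ht : 1 ≤ t)
    (htk : t ≤ k) :
    sInf (fk σ ζ k '' (Kspan k t : Set (Fin k → ℝ)))
      = 8 * ((k - t : ℕ) : ℝ) * Real.log 2 + sInf (Set.range (fk σ ζ t)) := by
  have himg : fk σ ζ k '' (Kspan k t : Set (Fin k → ℝ))
      = (fun r => 8 * ((k - t : ℕ) : ℝ) * Real.log 2 + r) '' Set.range (fk σ ζ t) := by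
    rw [Kspan_coe k t htk, ← Set.range_comp,
      show (fk σ ζ k ∘ Emap k t htk)
          = (fun r => 8 * ((k - t : ℕ) : ℝ) * Real.log 2 + r) ∘ fk σ ζ t from
        funext (fk_Emap σ ζ k t htk), Set.range_comp]
  rw [himg, sInf_const_add _ _ ⟨fk σ ζ t 0, Set.mem_range_self 0⟩
    ⟨0, fun y hy => by obtain ⟨u, rfl⟩ := hy; exact fk_nonneg σ ζ t u⟩]
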